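/- Let a < b be integers and k an integer. In the hexagonal grid, the distance from the vertex (k,a) to the horizontal line L_b = {(x,b) : x ∈ ℤ} equals 2(b−a)−1 if a+k is even, and 2(b−a) if a+k is odd. -/

import Mathlib

/-- The hexagonal grid in its brick wall representation: vertex set ℤ×ℤ,
with (x,y) adjacent to (x±1,y) always, and to (x,y+1) if x+y is even
(equivalently, to (x,y-1) if x+y is odd). -/
def hexGraph : SimpleGraph (ℤ × ℤ) where
  Adj u v := (u.2 = v.2 ∧ (u.1 = v.1 + 1 ∨ v.1 = u.1 + 1)) ∨
    (u.1 = v.1 ∧ ((v.2 = u.2 + 1 ∧ Even (u.1 + u.2)) ∨ (u.2 = v.2 + 1 ∧ Even (v.1 + v.2))))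
  symm := by
    constructor
    rintro u v (⟨h1, h2 | h2⟩ | ⟨h1, ⟨h2, h3⟩ | ⟨h2, h3⟩⟩)
    · exact Or.inl ⟨h1.symm, Or.inr h2⟩
    · exact Or.inl ⟨h1.symm, Or.inl h2⟩
    · exact Or.inr ⟨h1.symm, Or.inr ⟨h2, h3⟩⟩
    · exact Or.inr ⟨h1.symm, Or.inl ⟨h2, h3⟩⟩
  loopless := by constructor; rintro ⟨x, y⟩ (⟨_, h | h⟩ | ⟨_, ⟨h, _⟩ | ⟨h, _⟩⟩) <;> omega

/-- The graph distance from a vertex to the horizontal line L_k = {(x,k) : x ∈ ℤ}. -/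
noncomputable def hexLineDist (u : ℤ × ℤ) (k : ℤ) : ℕ :=
  sInf {n : ℕ | ∃ x : ℤ, hexGraph.dist u (x, k) = n}

/-- Potential function: lower bound for distance to the line y = b. -/
def hexPot (b x y : ℤ) : ℤ :=
  if y < b then 2*(b-y) - 1 + (x+y) % 2
  else if y = b then 0 else 2*(y-b) - (x+y) % 2

lemma hexPot_adj {b : ℤ} {u v : ℤ × ℤ} (h : hexGraph.Adj u v) :
    hexPot b u.1 u.2 ≤ hexPot b v.1 v.2 + 1 := by
  obtain ⟨x, y⟩ := u
  obtain ⟨x', y'⟩ := v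
  simp only [hexGraph, Int.even_iff] at h
  simp only [hexPot]
  obtain ⟨h1, h2 | h2⟩ | ⟨h1, ⟨h2, h3⟩ | ⟨h2, h3⟩⟩ := h <;> split_ifs <;> omega

lemma hexPot_walk {b : ℤ} {u v : ℤ × ℤ} (w : hexGraph.Walk u v) :
    hexPot b u.1 u.2 ≤ hexPot b v.1 v.2 + (w.length : ℤ) := by
  induction w with
  | nil => simp
  | cons h p ih =>
    have h1 := hexPot_adj (b := b) h
    rw [SimpleGraph.Walk.length_cons]
    push_cast
    omega

lemma hex_adj_up {x y : ℤ} (h : Even (x + y)) : hexGraph.Adj (x, y) (x, y + 1) :=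
  Or.inr ⟨rfl, Or.inl ⟨rfl, h⟩⟩

lemma hex_adj_right (x y : ℤ) : hexGraph.Adj (x, y) (x + 1, y) :=
  Or.inl ⟨rfl, Or.inr rfl⟩

/-- Upward walk from an even-parity vertex. -/
lemma hex_walk_up (n : ℕ) : ∀ x y : ℤ, Even (x + y) →
    ∃ w : hexGraph.Walk (x, y) (x + n, y + n + 1), w.length = 2 * n + 1 := by
  induction n with
  | zero =>
    intro x y h
    refine ⟨((hex_adj_up h).toWalk).copy rfl (by push_cast; ring_nf) , ?_⟩
    simp
  | succ n ih =>
    intro x y h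
    obtain ⟨w, hw⟩ := ih (x + 1) (y + 1) (by rcases h with ⟨m, hm⟩; exact ⟨m + 1, by omega⟩)
    refine ⟨(SimpleGraph.Walk.cons (hex_adj_up h)
      (SimpleGraph.Walk.cons (hex_adj_right x (y + 1)) w)).copy rfl (by push_cast; ring_nf), ?_⟩
    simp [hw]; ring


lemma hex_reach_right (x y : ℤ) (n : ℕ) : hexGraph.Reachable (x, y) (x + n, y) := by
  induction n with
  | zero => simpa using SimpleGraph.Reachable.refl _
  | succ n ih =>
    have h2 : hexGraph.Reachable (x + n, y) (x + (n + 1 : ℕ), y) := by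
      have := (hex_adj_right (x + n) y).reachable
      convert this using 2
      push_cast; ring
    exact ih.trans h2

lemma hex_reach_horiz (x x' y : ℤ) : hexGraph.Reachable (x, y) (x', y) := by
  rcases le_total x x' with h | h
  · have := hex_reach_right x y (x' - x).toNat
    rwa [Int.toNat_of_nonneg (by omega), show x + (x' - x) = x' by ring] at this
  · have := hex_reach_right x' y (x - x').toNat
    rw [Int.toNat_of_nonneg (by omega), show x' + (x - x') = x by ring] at this
    exact this.symm

lemma hexPot_line (b x : ℤ) : hexPot b x b = 0 := by
  simp [hexPot]

lemma hex_line_dist_eq (a b k : ℤ) (hab : a < b) (T : ℤ) (x₀ : ℤ)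
    (w : hexGraph.Walk (k, a) (x₀, b)) (hw : (w.length : ℤ) = T)
    (hpot : hexPot b k a = T) : (hexLineDist (k, a) b : ℤ) = T := by
  have hub : hexLineDist (k, a) b ≤ w.length := by
    refine le_trans (Nat.sInf_le ⟨x₀, rfl⟩) (hexGraph.dist_le w)
  have hne : {n : ℕ | ∃ x : ℤ, hexGraph.dist (k, a) (x, b) = n}.Nonempty :=
    ⟨hexGraph.dist (k, a) (x₀, b), x₀, rfl⟩
  obtain ⟨x₁, hx₁⟩ := Nat.sInf_mem hne
  have hreach : hexGraph.Reachable (k, a) (x₁, b) :=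
    w.reachable.trans (hex_reach_horiz x₀ x₁ b)
  obtain ⟨p, hp⟩ := hreach.exists_walk_length_eq_dist
  have hlow := hexPot_walk (b := b) p
  rw [hexPot_line] at hlow
  rw [hp, hx₁] at hlow
  simp only [hpot] at hlow
  unfold hexLineDist at *
  omega


/-- distance from (k,a) up to the line L_b for a < b. -/
theorem hex_vertex_line_dist_up (a b k : ℤ) (hab : a < b) :
    (hexLineDist (k, a) b : ℤ) = if Even (a + k) then 2 * (b - a) - 1 else 2 * (b - a) := by
  set n : ℕ := (b - a - 1).toNat with hn
  have hn' : (n : ℤ) = b - a - 1 := Int.toNat_of_nonneg (by omega)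
  by_cases hE : Even (a + k)
  · have hE' : Even (k + a) := by rwa [add_comm]
    obtain ⟨w, hw⟩ := hex_walk_up n k a hE'
    rw [if_pos hE]
    refine hex_line_dist_eq a b k hab _ (k + n)
      (w.copy rfl (by rw [show a + (n : ℤ) + 1 = b by omega])) ?_ ?_
    · rw [SimpleGraph.Walk.length_copy, hw]; push_cast; omega
    · have := Int.even_iff.mp hE'
      simp only [hexPot, if_pos hab]
      omega
  · have hE' : Even ((k + 1) + a) := by
      rcases Int.even_or_odd (k + a) with h | h
      · exact absurd (by rwa [add_comm] at h) hE
      · rcases h with ⟨m, hm⟩; exact ⟨m + 1, by omega⟩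
    obtain ⟨w, hw⟩ := hex_walk_up n (k + 1) a hE'
    rw [if_neg hE]
    refine hex_line_dist_eq a b k hab _ (k + 1 + n)
      ((SimpleGraph.Walk.cons (hex_adj_right k a) w).copy rfl
        (by rw [show a + (n : ℤ) + 1 = b by omega])) ?_ ?_
    · rw [SimpleGraph.Walk.length_copy, SimpleGraph.Walk.length_cons, hw]; push_cast; omega
    · have h1 : ¬ Even (k + a) := by rwa [add_comm] at hE
      have := Int.not_even_iff.mp h1
      simp only [hexPot, if_pos hab]
      omega
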